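/- Let n, k, m ∈ ℕ, let g₀ = 1 (with d₀ = 0), and let g₁,…,g_m be real polynomials in n variables with gᵢ = Σ_{ζ∈ℕ^n_{2dᵢ}} g_{i,ζ} x^ζ, dᵢ ≤ k, and Σ_{ζ} |g_{i,ζ}| ≤ 1 for each i = 0,…,m. For γ ∈ ℕ^n_{2k}, let B_g^{(γ)} be the block-diagonal real symmetric matrix whose i-th diagonal block (indexed by ℕ^n_{k−dᵢ}) is Σ_{ζ∈ℕ^n_{2dᵢ}, γ−ζ∈ℕ^n} g_{i,ζ} · Bᵢ^{(γ−ζ)}, where Bᵢ^{(η)} is the real symmetric matrix indexed by ℕ^n_{k−dᵢ} with (α,β) entry 1 if α + β = η and 0 otherwise. Then −I ⪯ B_g^{(γ)} ⪯ I, where I is the identity matrix of the same size as B_g^{(γ)}. -/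

import Mathlib

open Matrix BigOperators

/-- The set `ℕ^n_k` of multi-indices `α ∈ ℕ^n` with `|α| = α₁ + ⋯ + αₙ ≤ k`. -/
abbrev MIdx (n k : ℕ) : Type := {α : Fin n → ℕ // ∑ i, α i ≤ k}

noncomputable instance (n k : ℕ) : Fintype (MIdx n k) :=
  Fintype.ofInjective
    (fun a : MIdx n k => fun i : Fin n =>
      (⟨a.1 i, Nat.lt_succ_of_le
        ((Finset.single_le_sum (fun j _ => Nat.zero_le (a.1 j)) (Finset.mem_univ i)).trans
          a.2)⟩ : Fin (k + 1)))
    (fun a b h => Subtype.ext (funext fun i => congrArg Fin.val (congrFun h i)))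

/-- The block-diagonal coefficient-matching matrix `B_g^{(γ)}`: its `i`-th diagonal block,
indexed by `ℕ^n_{k−dᵢ}`, is `Σ_{ζ∈ℕ^n_{2dᵢ}, γ−ζ∈ℕ^n} g_{i,ζ} Bᵢ^{(γ−ζ)}`; that is, the
entry at `((i,α),(i,β))` is `Σ_{ζ : α+β+ζ = γ} g_{i,ζ}`, and off-block entries vanish. -/
noncomputable def BgMat (n k m : ℕ) (d : Fin (m + 1) → ℕ)
    (gc : Fin (m + 1) → (Fin n → ℕ) → ℝ) (γ : Fin n → ℕ) :
    Matrix ((i : Fin (m + 1)) × MIdx n (k - d i))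
      ((i : Fin (m + 1)) × MIdx n (k - d i)) ℝ :=
  Matrix.of fun p q =>
    if p.1 = q.1 then
      ∑ ζ : MIdx n (2 * d p.1),
        if (fun j => p.2.1 j + q.2.1 j + ζ.1 j) = γ then gc p.1 ζ.1 else 0
    else 0

section Aux

/-- Sum of an indicator-weighted nonnegative constant over a subsingleton predicate. -/
lemma sum_ite_le_of_unique {S : Type*} [Fintype S] (P : S → Prop) [DecidablePred P]
    (h : ∀ a b, P a → P b → a = b) (c : ℝ) (hc : 0 ≤ c) :
    ∑ a : S, (if P a then c else 0) ≤ c := by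
  classical
  by_cases he : ∃ a, P a
  · obtain ⟨a, ha⟩ := he
    have hrw : ∀ b : S, (if P b then c else 0) = if b = a then c else 0 := by
      intro b
      by_cases hb : P b
      · rw [if_pos hb, if_pos (h b a hb ha)]
      · have hba : b ≠ a := fun e => hb (e ▸ ha)
        rw [if_neg hb, if_neg hba]
    rw [Finset.sum_congr rfl fun b _ => hrw b]
    simp
  · push_neg at he
    simp [he, hc]

lemma inner_bound {n : ℕ} (K : ℕ) (ζ γ : Fin n → ℕ) (y : MIdx n K → ℝ) :
    |∑ α : MIdx n K, ∑ β : MIdx n K,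
      (if (fun j => α.1 j + β.1 j + ζ j) = γ then y α * y β else 0)|
      ≤ ∑ α : MIdx n K, y α ^ 2 := by
  classical
  have step1 : |∑ α : MIdx n K, ∑ β : MIdx n K,
      (if (fun j => α.1 j + β.1 j + ζ j) = γ then y α * y β else 0)|
      ≤ ∑ α : MIdx n K, ∑ β : MIdx n K,
        (if (fun j => α.1 j + β.1 j + ζ j) = γ then (y α ^ 2 + y β ^ 2) / 2 else 0) := by
    refine (Finset.abs_sum_le_sum_abs _ _).trans ?_
    refine Finset.sum_le_sum fun α _ => (Finset.abs_sum_le_sum_abs _ _).trans ?_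
    refine Finset.sum_le_sum fun β _ => ?_
    split_ifs
    · rw [abs_mul]
      nlinarith [sq_nonneg (|y α| - |y β|), sq_abs (y α), sq_abs (y β), abs_nonneg (y α),
        abs_nonneg (y β)]
    · simp
  refine step1.trans ?_
  have split : ∀ α β : MIdx n K,
      (if (fun j => α.1 j + β.1 j + ζ j) = γ then (y α ^ 2 + y β ^ 2) / 2 else 0)
      = ((if (fun j => α.1 j + β.1 j + ζ j) = γ then y α ^ 2 else 0)
        + (if (fun j => α.1 j + β.1 j + ζ j) = γ then y β ^ 2 else 0)) / 2 := by
    intro α β; split_ifs <;> ring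
  simp only [split]
  have h1 : (∑ α : MIdx n K, ∑ β : MIdx n K,
      (if (fun j => α.1 j + β.1 j + ζ j) = γ then y α ^ 2 else 0)) ≤ ∑ α : MIdx n K, y α ^ 2 := by
    refine Finset.sum_le_sum fun α _ => ?_
    refine sum_ite_le_of_unique _ ?_ _ (sq_nonneg _)
    intro a b ha hb
    refine Subtype.ext (funext fun j => ?_)
    have h1 := congrFun ha j
    have h2 := congrFun hb j
    omega
  have h2 : (∑ α : MIdx n K, ∑ β : MIdx n K,
      (if (fun j => α.1 j + β.1 j + ζ j) = γ then y β ^ 2 else 0)) ≤ ∑ α : MIdx n K, y α ^ 2 := by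
    rw [Finset.sum_comm]
    refine Finset.sum_le_sum fun β _ => ?_
    refine sum_ite_le_of_unique _ ?_ _ (sq_nonneg _)
    intro a b ha hb
    refine Subtype.ext (funext fun j => ?_)
    have h1 := congrFun ha j
    have h2 := congrFun hb j
    omega
  calc ∑ α : MIdx n K, ∑ β : MIdx n K,
        (((if (fun j => α.1 j + β.1 j + ζ j) = γ then y α ^ 2 else 0)
          + (if (fun j => α.1 j + β.1 j + ζ j) = γ then y β ^ 2 else 0)) / 2)
      = ((∑ α : MIdx n K, ∑ β : MIdx n K,
            (if (fun j => α.1 j + β.1 j + ζ j) = γ then y α ^ 2 else 0))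
        + (∑ α : MIdx n K, ∑ β : MIdx n K,
            (if (fun j => α.1 j + β.1 j + ζ j) = γ then y β ^ 2 else 0))) / 2 := by
        rw [← Finset.sum_add_distrib, Finset.sum_div]
        refine Finset.sum_congr rfl fun α _ => ?_
        rw [← Finset.sum_add_distrib, Finset.sum_div]
    _ ≤ ∑ α : MIdx n K, y α ^ 2 := by linarith

lemma quad_bound (n k m : ℕ) (d : Fin (m + 1) → ℕ)
    (gc : Fin (m + 1) → (Fin n → ℕ) → ℝ)
    (hl1 : ∀ i : Fin (m + 1), ∑ ζ : MIdx n (2 * d i), |gc i ζ.1| ≤ 1)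
    (γ : Fin n → ℕ) (x : ((i : Fin (m + 1)) × MIdx n (k - d i)) → ℝ) :
    |x ⬝ᵥ (BgMat n k m d gc γ) *ᵥ x| ≤ x ⬝ᵥ x := by
  classical
  have hQ : x ⬝ᵥ (BgMat n k m d gc γ) *ᵥ x
      = ∑ i : Fin (m + 1), ∑ ζ : MIdx n (2 * d i), gc i ζ.1 *
          (∑ α : MIdx n (k - d i), ∑ β : MIdx n (k - d i),
            (if (fun j => α.1 j + β.1 j + ζ.1 j) = γ then x ⟨i, α⟩ * x ⟨i, β⟩ else 0)) := by
    rw [dotProduct]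
    simp only [mulVec, dotProduct, Finset.mul_sum]
    rw [← Finset.univ_sigma_univ, Finset.sum_sigma]
    refine Finset.sum_congr rfl fun i _ => ?_
    have hblock : ∀ α : MIdx n (k - d i),
        (∑ q : (i : Fin (m + 1)) × MIdx n (k - d i),
          x ⟨i, α⟩ * (BgMat n k m d gc γ ⟨i, α⟩ q * x q))
        = ∑ β : MIdx n (k - d i),
            x ⟨i, α⟩ * ((∑ ζ : MIdx n (2 * d i),
              (if (fun j => α.1 j + β.1 j + ζ.1 j) = γ then gc i ζ.1 else 0)) * x ⟨i, β⟩) := by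
      intro α
      rw [← Finset.univ_sigma_univ, Finset.sum_sigma]
      rw [Finset.sum_eq_single i]
      · refine Finset.sum_congr rfl fun β _ => ?_
        simp [BgMat]
      · intro j _ hj
        refine Finset.sum_eq_zero fun β _ => ?_
        simp only [BgMat, Matrix.of_apply]
        rw [if_neg (by simpa using fun h => hj h.symm)]
        ring
      · intro h; exact absurd (Finset.mem_univ i) h
    calc (∑ α : MIdx n (k - d i), ∑ q : (i : Fin (m + 1)) × MIdx n (k - d i),
            x ⟨i, α⟩ * (BgMat n k m d gc γ ⟨i, α⟩ q * x q))
        = ∑ α : MIdx n (k - d i), ∑ β : MIdx n (k - d i), ∑ ζ : MIdx n (2 * d i),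
            (if (fun j => α.1 j + β.1 j + ζ.1 j) = γ then gc i ζ.1 * (x ⟨i, α⟩ * x ⟨i, β⟩)
             else 0) := by
          refine Finset.sum_congr rfl fun α _ => ?_
          rw [hblock α]
          refine Finset.sum_congr rfl fun β _ => ?_
          rw [Finset.sum_mul, Finset.mul_sum]
          refine Finset.sum_congr rfl fun ζ _ => ?_
          split_ifs <;> ring
      _ = ∑ ζ : MIdx n (2 * d i), ∑ α : MIdx n (k - d i), ∑ β : MIdx n (k - d i),
            (if (fun j => α.1 j + β.1 j + ζ.1 j) = γ then gc i ζ.1 * (x ⟨i, α⟩ * x ⟨i, β⟩)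
             else 0) := by
          rw [show (∑ α : MIdx n (k - d i), ∑ β : MIdx n (k - d i), ∑ ζ : MIdx n (2 * d i),
              (if (fun j => α.1 j + β.1 j + ζ.1 j) = γ then gc i ζ.1 * (x ⟨i, α⟩ * x ⟨i, β⟩)
               else 0))
            = ∑ α : MIdx n (k - d i), ∑ ζ : MIdx n (2 * d i), ∑ β : MIdx n (k - d i),
              (if (fun j => α.1 j + β.1 j + ζ.1 j) = γ then gc i ζ.1 * (x ⟨i, α⟩ * x ⟨i, β⟩)
               else 0) from Finset.sum_congr rfl fun α _ => Finset.sum_comm]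
          exact Finset.sum_comm
      _ = ∑ ζ : MIdx n (2 * d i), ∑ α : MIdx n (k - d i), ∑ β : MIdx n (k - d i),
            gc i ζ.1 * (if (fun j => α.1 j + β.1 j + ζ.1 j) = γ then x ⟨i, α⟩ * x ⟨i, β⟩
             else 0) := by
          refine Finset.sum_congr rfl fun ζ _ => Finset.sum_congr rfl fun α _ =>
            Finset.sum_congr rfl fun β _ => ?_
          split_ifs <;> ring
  have hxx : x ⬝ᵥ x = ∑ i : Fin (m + 1), ∑ α : MIdx n (k - d i), x ⟨i, α⟩ ^ 2 := by
    rw [dotProduct, ← Finset.univ_sigma_univ, Finset.sum_sigma]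
    exact Finset.sum_congr rfl fun i _ => Finset.sum_congr rfl fun α _ => (sq _).symm
  rw [hQ, hxx]
  refine (Finset.abs_sum_le_sum_abs _ _).trans (Finset.sum_le_sum fun i _ => ?_)
  have hN : 0 ≤ ∑ α : MIdx n (k - d i), x ⟨i, α⟩ ^ 2 :=
    Finset.sum_nonneg fun α _ => sq_nonneg _
  calc |∑ ζ : MIdx n (2 * d i), gc i ζ.1 *
          (∑ α : MIdx n (k - d i), ∑ β : MIdx n (k - d i),
            (if (fun j => α.1 j + β.1 j + ζ.1 j) = γ then x ⟨i, α⟩ * x ⟨i, β⟩ else 0))|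
      ≤ ∑ ζ : MIdx n (2 * d i), |gc i ζ.1| * (∑ α : MIdx n (k - d i), x ⟨i, α⟩ ^ 2) := by
        refine (Finset.abs_sum_le_sum_abs _ _).trans (Finset.sum_le_sum fun ζ _ => ?_)
        rw [abs_mul]
        exact mul_le_mul_of_nonneg_left
          (inner_bound (k - d i) ζ.1 γ (fun α => x ⟨i, α⟩)) (abs_nonneg _)
    _ = (∑ ζ : MIdx n (2 * d i), |gc i ζ.1|) * (∑ α : MIdx n (k - d i), x ⟨i, α⟩ ^ 2) := by
        rw [Finset.sum_mul]
    _ ≤ 1 * (∑ α : MIdx n (k - d i), x ⟨i, α⟩ ^ 2) :=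
        mul_le_mul_of_nonneg_right (hl1 i) hN
    _ = ∑ α : MIdx n (k - d i), x ⟨i, α⟩ ^ 2 := one_mul _

lemma bg_herm (n k m : ℕ) (d : Fin (m + 1) → ℕ)
    (gc : Fin (m + 1) → (Fin n → ℕ) → ℝ) (γ : Fin n → ℕ) :
    (BgMat n k m d gc γ).IsHermitian := by
  classical
  refine Matrix.IsHermitian.ext fun p q => ?_
  obtain ⟨i, α⟩ := p
  obtain ⟨j, β⟩ := q
  simp only [BgMat, Matrix.of_apply, star_trivial]
  by_cases h : j = i
  · subst h
    rw [if_pos rfl, if_pos rfl]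
    refine Finset.sum_congr rfl fun ζ _ => ?_
    have hc : ((fun l => β.1 l + α.1 l + ζ.1 l) = γ) ↔ ((fun l => α.1 l + β.1 l + ζ.1 l) = γ) := by
      constructor <;> intro hh <;> rw [← hh] <;> exact funext fun l => by ring
    rw [if_congr hc rfl rfl]
  · rw [if_neg h, if_neg (fun hh => h hh.symm)]

end Aux

/-- If `g₀ = 1`, each `gᵢ` has degree at most `2dᵢ ≤ 2k` and
`Σ_ζ |g_{i,ζ}| ≤ 1`, then `−I ⪯ B_g^{(γ)} ⪯ I` for every `γ ∈ ℕ^n_{2k}`. -/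
theorem stmt9 (n k m : ℕ) (d : Fin (m + 1) → ℕ) (hd0 : d 0 = 0) (hdk : ∀ i, d i ≤ k)
    (gc : Fin (m + 1) → (Fin n → ℕ) → ℝ)
    (hg0 : gc 0 = fun ζ => if ζ = 0 then 1 else 0)
    (hsupp : ∀ (i : Fin (m + 1)) (ζ : Fin n → ℕ), ¬ (∑ j, ζ j ≤ 2 * d i) → gc i ζ = 0)
    (hl1 : ∀ i : Fin (m + 1), ∑ ζ : MIdx n (2 * d i), |gc i ζ.1| ≤ 1)
    (γ : Fin n → ℕ) (hγ : ∑ j, γ j ≤ 2 * k) :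
    (1 - BgMat n k m d gc γ).PosSemidef ∧ (BgMat n k m d gc γ + 1).PosSemidef := by
  classical
  have hherm := bg_herm n k m d gc γ
  have hb := quad_bound n k m d gc hl1 γ
  constructor
  · refine Matrix.posSemidef_iff_dotProduct_mulVec.mpr ⟨Matrix.isHermitian_one.sub hherm, fun x => ?_⟩
    have h := hb x
    rw [star_trivial, Matrix.sub_mulVec, Matrix.one_mulVec, dotProduct_sub]
    have := abs_le.mp h
    linarith [this.2]
  · refine Matrix.posSemidef_iff_dotProduct_mulVec.mpr ⟨hherm.add Matrix.isHermitian_one, fun x => ?_⟩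
    have h := hb x
    rw [star_trivial, Matrix.add_mulVec, Matrix.one_mulVec, dotProduct_add]
    have := abs_le.mp h
    linarith [this.1]
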